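/- In the 3-CSRA reduction: if the family F can be partitioned into three disjoint collections P_1, P_2, P_3 each of which covers U, then assigning color i to the nodes of F̄ corresponding to P_i (i = 1,2,3) and arbitrary colors to Ū makes the bipartite graph G strongly (r,Δ,∅)-robust with respect to S = F̄, where r = |F|. -/
import Mathlib


open Finset

def threeColors {V Γ : Type*} (Δ : V → Γ) (F : Finset V) : Prop :=
  ∃ u ∈ F, ∃ v ∈ F, ∃ w ∈ F, Δ u ≠ Δ v ∧ Δ v ≠ Δ w ∧ Δ u ≠ Δ w

def reachable {V Γ : Type*} [DecidableEq V] (N : V → Finset V) (Δ : V → Γ)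
    (T : Finset V) (r : ℕ) (C : Finset V) : Prop :=
  ∃ i ∈ C, r ≤ ((N i) \ C).card ∨ threeColors Δ ((N i) \ C) ∨ ∃ t ∈ (N i) \ C, t ∈ T

def strongRobust {V Γ : Type*} [Fintype V] [DecidableEq V] (N : V → Finset V) (Δ : V → Γ)
    (T : Finset V) (r : ℕ) (S : Finset V) : Prop :=
  ∀ C : Finset V, C.Nonempty → C ⊆ Sᶜ → reachable N Δ T r C

/-- The bipartite graph of the set-cover reduction: edge from `f_j` to `u_i` iff `i ∈ F j`. -/
def scNbhd (p m : ℕ) (F : Fin m → Finset (Fin p)) :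
    (Fin p ⊕ Fin m) → Finset (Fin p ⊕ Fin m) :=
  Sum.elim
    (fun i => (Finset.univ.filter fun j => i ∈ F j).image Sum.inr)
    (fun _ => ∅)

/-- The source set `F̄` of the set-cover reduction. -/
def scSource (p m : ℕ) : Finset (Fin p ⊕ Fin m) :=
  Finset.univ.image Sum.inr


theorem stmt16 (p m : ℕ) (F : Fin m → Finset (Fin p))
    -- `P` partitions `F` into three collections, each covering `U`
    (P : Fin m → Fin 3)
    (hcover : ∀ c : Fin 3, ∀ i : Fin p, ∃ j : Fin m, P j = c ∧ i ∈ F j)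
    -- arbitrary colors on the `Ū` side
    (δU : Fin p → Fin 3) :
    strongRobust (scNbhd p m F) (Sum.elim δU P)
      (∅ : Finset (Fin p ⊕ Fin m)) m (scSource p m) := by
  intro C hne hsub
  obtain ⟨x, hx⟩ := hne
  -- x must be a Sum.inl
  have hxl : ∃ u : Fin p, x = Sum.inl u := by
    cases x with
    | inl u => exact ⟨u, rfl⟩
    | inr j =>
      exfalso
      have := hsub hx
      simp [scSource, Finset.mem_compl] at this
  obtain ⟨u, rfl⟩ := hxl
  refine ⟨Sum.inl u, hx, Or.inr (Or.inl ?_)⟩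
  obtain ⟨j0, hj0, hm0⟩ := hcover 0 u
  obtain ⟨j1, hj1, hm1⟩ := hcover 1 u
  obtain ⟨j2, hj2, hm2⟩ := hcover 2 u
  have hC : ∀ j : Fin m, (Sum.inr j : Fin p ⊕ Fin m) ∉ C := by
    intro j hj
    have := hsub hj
    simp [scSource, Finset.mem_compl] at this
  have hmem : ∀ j : Fin m, u ∈ F j →
      (Sum.inr j : Fin p ⊕ Fin m) ∈ (scNbhd p m F (Sum.inl u)) \ C := by
    intro j hj
    simp [scNbhd, Finset.mem_sdiff, hC j, hj]
  refine ⟨_, hmem j0 hm0, _, hmem j1 hm1, _, hmem j2 hm2, ?_, ?_, ?_⟩ <;>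
    simp [hj0, hj1, hj2]
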